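/- Let n ≥ 1 and let x_1, …, x_n be pairwise distinct real numbers in (−1, 1). Then (1 − x_i²)·∑_{k≠i} 2/(x_i − x_k) = 2·x_i holds for all 1 ≤ i ≤ n if and only if there exists λ ∈ ℝ such that the polynomial y(x) = ∏_{k=1}^n (x − x_k) satisfies ((1 − x²)·y'(x))' + λ·y(x) = 0 identically. -/

import Mathlib

open Polynomial Finset

lemma my_derivative_finset_prod {R ι : Type*} [CommSemiring R] [DecidableEq ι]
    (s : Finset ι) (f : ι → Polynomial R) :
    Polynomial.derivative (∏ i ∈ s, f i) =
      ∑ i ∈ s, (∏ j ∈ s.erase i, f j) * Polynomial.derivative (f i) := by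
  induction s using Finset.induction_on with
  | empty => simp
  | @insert a s ha ih =>
    rw [Finset.prod_insert ha, Polynomial.derivative_mul, ih, Finset.sum_insert ha,
      Finset.erase_insert ha, Finset.mul_sum]
    have h1 : ∀ i ∈ s, (∏ j ∈ (insert a s).erase i, f j) * Polynomial.derivative (f i)
        = f a * ((∏ j ∈ s.erase i, f j) * Polynomial.derivative (f i)) := by
      intro i hi
      rw [Finset.erase_insert_of_ne (by rintro rfl; exact ha hi),
        Finset.prod_insert (fun h => ha (Finset.mem_of_mem_erase h)), mul_assoc]
    rw [Finset.sum_congr rfl h1]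
    ring


theorem stmt_13 (n : ℕ) (hn : 1 ≤ n) (x : Fin n → ℝ) (hx : Function.Injective x)
    (hmem : ∀ i, x i ∈ Set.Ioo (-1 : ℝ) 1) :
    (∀ i : Fin n, (1 - x i ^ 2) * ∑ k ∈ univ.erase i, 2 / (x i - x k) = 2 * x i) ↔
    (∃ lam : ℝ,
      derivative ((1 - X ^ 2) * derivative (∏ k, (X - C (x k))))
        + C lam * ∏ k, (X - C (x k)) = 0) := by
  classical
  set y : ℝ[X] := ∏ k, (X - C (x k)) with hy
  set P : ℝ[X] := derivative ((1 - X ^ 2) * derivative y) with hP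
  -- first derivative at x i
  have hD : ∀ i : Fin n,
      eval (x i) (derivative y) = ∏ k ∈ univ.erase i, (x i - x k) := by
    intro i
    rw [hy, my_derivative_finset_prod]
    simp only [derivative_sub, derivative_X, derivative_C, sub_zero, mul_one]
    rw [eval_finset_sum, Finset.sum_eq_single i]
    · rw [eval_prod]; simp
    · intro j _ hj
      rw [eval_prod]
      refine Finset.prod_eq_zero (Finset.mem_erase.mpr ⟨Ne.symm hj, Finset.mem_univ i⟩) ?_
      simp
    · simp
  have hDne : ∀ i : Fin n, (∏ k ∈ univ.erase i, (x i - x k)) ≠ 0 := by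
    intro i
    rw [Finset.prod_ne_zero_iff]
    intro k hk
    exact sub_ne_zero.mpr (hx.ne (Finset.ne_of_mem_erase hk).symm)
  -- second derivative at x i
  have hDD : ∀ i : Fin n,
      eval (x i) (derivative (derivative y)) =
        2 * ∑ j ∈ univ.erase i, ∏ k ∈ (univ.erase i).erase j, (x i - x k) := by
    intro i
    have hy' : derivative y = ∑ j : Fin n, ∏ k ∈ univ.erase j, (X - C (x k)) := by
      rw [hy, my_derivative_finset_prod]
      simp
    have hterm : ∀ j : Fin n,
        eval (x i) (derivative (∏ k ∈ univ.erase j, (X - C (x k)))) =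
          ∑ l ∈ univ.erase j, ∏ k ∈ (univ.erase j).erase l, (x i - x k) := by
      intro j
      rw [my_derivative_finset_prod]
      simp only [derivative_sub, derivative_X, derivative_C, sub_zero, mul_one]
      rw [eval_finset_sum]
      refine Finset.sum_congr rfl fun l _ => ?_
      rw [eval_prod]
      simp
    rw [hy', derivative_sum, eval_finset_sum]
    rw [Finset.sum_congr rfl fun j _ => hterm j]
    rw [← Finset.add_sum_erase _ _ (Finset.mem_univ i)]
    have hT : ∀ j ∈ univ.erase i,
        (∑ l ∈ univ.erase j, ∏ k ∈ (univ.erase j).erase l, (x i - x k)) =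
          ∏ k ∈ (univ.erase i).erase j, (x i - x k) := by
      intro j hj
      have hji : j ≠ i := Finset.ne_of_mem_erase hj
      rw [Finset.sum_eq_single i]
      · rw [Finset.erase_right_comm]
      · intro l hl hli
        refine Finset.prod_eq_zero (Finset.mem_erase.mpr ⟨Ne.symm hli,
          Finset.mem_erase.mpr ⟨Ne.symm hji, Finset.mem_univ i⟩⟩) ?_
        simp
      · intro h
        exact absurd (Finset.mem_erase.mpr ⟨Ne.symm hji, Finset.mem_univ i⟩) h
    rw [Finset.sum_congr rfl hT]
    ring
  -- the key pointwise identity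
  have hkey : ∀ i : Fin n, eval (x i) P =
      ((1 - x i ^ 2) * (∑ k ∈ univ.erase i, 2 / (x i - x k)) - 2 * x i) *
        ∏ k ∈ univ.erase i, (x i - x k) := by
    intro i
    have hSD : (∑ k ∈ univ.erase i, 2 / (x i - x k)) * (∏ k ∈ univ.erase i, (x i - x k)) =
        2 * ∑ j ∈ univ.erase i, ∏ k ∈ (univ.erase i).erase j, (x i - x k) := by
      rw [Finset.sum_mul, Finset.mul_sum]
      refine Finset.sum_congr rfl fun j hj => ?_
      rw [← Finset.mul_prod_erase _ _ hj]
      have hne : x i - x j ≠ 0 :=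
        sub_ne_zero.mpr (hx.ne (Finset.ne_of_mem_erase hj).symm)
      field_simp
    rw [hP, derivative_mul]
    simp only [eval_add, eval_mul, eval_sub, eval_one, eval_pow, eval_X, hD i, hDD i]
    have hd1 : derivative (1 - X ^ 2 : ℝ[X]) = -(C 2 * X) := by
      simp [derivative_X_pow]
      exact (by norm_num : (1:ℝ[X]) + 1 = 2).trans (map_ofNat C 2).symm
    rw [hd1]
    simp only [eval_neg, eval_mul, eval_C, eval_X]
    nlinarith [hSD]
  have hyroot : ∀ i : Fin n, eval (x i) y = 0 := by
    intro i
    rw [hy, eval_prod]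
    exact Finset.prod_eq_zero (Finset.mem_univ i) (by simp)
  constructor
  · intro h
    have hroot : ∀ i : Fin n, eval (x i) P = 0 := by
      intro i
      rw [hkey i, h i, sub_self, zero_mul]
    have hdvd : y ∣ P := by
      rw [hy]
      refine Fintype.prod_dvd_of_coprime (pairwise_coprime_X_sub_C hx) fun i => ?_
      exact dvd_iff_isRoot.mpr (hroot i)
    obtain ⟨g, hg⟩ := hdvd
    have hymon : y.Monic := monic_prod_of_monic _ _ fun k _ => monic_X_sub_C _
    have hyd : y.natDegree = n := by
      rw [hy, natDegree_prod_of_monic _ _ fun k _ => monic_X_sub_C _]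
      simp
    have hPdeg : P.natDegree ≤ n := by
      have h1 : ((1 - X ^ 2 : ℝ[X]) * derivative y).natDegree ≤ 2 + (n - 1) := by
        refine natDegree_mul_le.trans (add_le_add ?_ ?_)
        · exact (natDegree_sub_le _ _).trans (by simp)
        · exact hyd ▸ natDegree_derivative_le y
      have h2 : P.natDegree ≤ 2 + (n - 1) - 1 :=
        (natDegree_derivative_le _).trans (Nat.sub_le_sub_right h1 1)
      omega
    rcases eq_or_ne g 0 with rfl | hg0
    · exact ⟨0, by rw [hg]; simp⟩
    · have hdeg : g.natDegree = 0 := by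
        have := natDegree_mul hymon.ne_zero hg0
        rw [← hg] at this
        omega
      obtain ⟨c, rfl⟩ := natDegree_eq_zero.mp hdeg
      refine ⟨-c, ?_⟩
      rw [hg, map_neg]
      ring
  · rintro ⟨lam, hlam⟩ i
    have h0 : eval (x i) P = 0 := by
      have := congrArg (eval (x i)) hlam
      simpa [hyroot i] using this
    rw [hkey i] at h0
    rcases mul_eq_zero.mp h0 with h | h
    · linarith
    · exact absurd h (hDne i)
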